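/- arXiv:2211.08219 — 3 statements merged into one kernel-verified Lean document; each statement's English description precedes it below -/
import Mathlib

section
/- Let n ≥ 2, T > 0 and suppose u : [0,T] → ℝ is C² on (0,T], continuous at 0, satisfies u'' + (n-1) coth(t) u' ≥ 0 on an interval (t₀, T) with 0 ≤ t₀ < T, u(T) = 0, and u > 0 on (t₀, T), where u(t₀) = 0 if t₀ > 0 (and u bounded near 0 if t₀ = 0). Then this leads to a contradiction; equivalently, no such function exists with u'(T) < 0. -/
open Real

/-- `sinh x ≤ cosh 1 * x` for `x ∈ [0,1]`. -/
lemma sinh_le_cosh_one_mul {x : ℝ} (hx0 : 0 ≤ x) (hx1 : x ≤ 1) :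
    Real.sinh x ≤ Real.cosh 1 * x := by
  have hmono : MonotoneOn (fun y => Real.cosh 1 * y - Real.sinh y) (Set.Icc 0 1) := by
    have hder : ∀ y : ℝ, HasDerivAt (fun y => Real.cosh 1 * y - Real.sinh y)
        (Real.cosh 1 - Real.cosh y) y := by
      intro y
      have h1 : HasDerivAt (fun y : ℝ => Real.cosh 1 * y) (Real.cosh 1 * 1) y :=
        (hasDerivAt_id y).const_mul _
      exact (h1.sub (Real.hasDerivAt_sinh y)).congr_deriv (by ring)
    apply monotoneOn_of_deriv_nonneg (convex_Icc 0 1)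
    · exact fun y hy => ((hder y).continuousAt).continuousWithinAt
    · exact fun y hy => ((hder y).differentiableAt).differentiableWithinAt
    · intro y hy
      rw [interior_Icc] at hy
      rw [(hder y).deriv]
      have : Real.cosh y ≤ Real.cosh 1 := by
        rw [Real.cosh_le_cosh, abs_of_nonneg hy.1.le, abs_one]
        exact hy.2.le
      linarith
  have h := hmono (Set.mem_Icc.2 ⟨le_refl 0, zero_le_one⟩) (Set.mem_Icc.2 ⟨hx0, hx1⟩) hx0
  simp only [mul_zero, Real.sinh_zero, sub_zero] at h
  linarith

/-- No function `u`, C² on `(0,T]` and continuous at `0`, can satisfy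
`u'' + (n-1) coth(t) u' ≥ 0` on `(t₀,T)`, `u(T) = 0`, `u > 0` on `(t₀,T)`,
with `u(t₀) = 0` if `t₀ > 0` (and `u` bounded near `0` if `t₀ = 0`),
together with `u'(T) < 0`. -/
theorem no_positive_supersolution (n : ℕ) (hn : 2 ≤ n) (T t₀ : ℝ)
    (hT : 0 < T) (ht₀ : 0 ≤ t₀) (ht₀T : t₀ < T)
    (u : ℝ → ℝ)
    (hreg : ContDiffOn ℝ 2 u (Set.Ioc 0 T))
    (hcont : ContinuousWithinAt u (Set.Icc 0 T) 0)
    (hineq : ∀ t ∈ Set.Ioo t₀ T,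
      deriv (deriv u) t + ((n : ℝ) - 1) * (Real.cosh t / Real.sinh t) * deriv u t ≥ 0)
    (huT : u T = 0)
    (hupos : ∀ t ∈ Set.Ioo t₀ T, 0 < u t)
    (hzero : 0 < t₀ → u t₀ = 0)
    (hbdd : t₀ = 0 → ∃ M : ℝ, ∀ t ∈ Set.Ioo (0 : ℝ) T, |u t| ≤ M) :
    ¬ deriv u T < 0 := by
  intro _
  set m := n - 1 with hm_def
  have hm1 : 1 ≤ m := by omega
  have hmn : ((n : ℝ) - 1) = (m : ℝ) := by
    rw [hm_def, Nat.cast_sub (by omega : 1 ≤ n)]; norm_num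
  -- regularity facts
  have hu2 : ContDiffOn ℝ 2 u (Set.Ioo 0 T) := hreg.mono Set.Ioo_subset_Ioc_self
  have hdu : ∀ s ∈ Set.Ioo (0:ℝ) T, DifferentiableAt ℝ u s := fun s hs =>
    (hu2.differentiableOn (by norm_num)).differentiableAt (isOpen_Ioo.mem_nhds hs)
  have hdu1 : ContDiffOn ℝ 1 (deriv u) (Set.Ioo 0 T) :=
    hu2.deriv_of_isOpen isOpen_Ioo (by norm_num)
  have hdu' : ∀ s ∈ Set.Ioo (0:ℝ) T, DifferentiableAt ℝ (deriv u) s := fun s hs =>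
    (hdu1.differentiableOn (by norm_num)).differentiableAt (isOpen_Ioo.mem_nhds hs)
  have hsub0 : Set.Ioo t₀ T ⊆ Set.Ioo 0 T := fun x hx => ⟨lt_of_le_of_lt ht₀ hx.1, hx.2⟩
  -- the comparison function g
  set g : ℝ → ℝ := fun t => Real.sinh t ^ m * deriv u t with hg_def
  have hgd : ∀ s ∈ Set.Ioo (0:ℝ) T, HasDerivAt g
      ((m : ℝ) * Real.sinh s ^ (m-1) * Real.cosh s * deriv u s
        + Real.sinh s ^ m * deriv (deriv u) s) s := fun s hs =>
    (((Real.hasDerivAt_sinh s).pow m).mul ((hdu' s hs).hasDerivAt))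
  have hgmono : ∀ s ∈ Set.Ioo t₀ T,
      0 ≤ (m:ℝ) * Real.sinh s ^ (m-1) * Real.cosh s * deriv u s
        + Real.sinh s ^ m * deriv (deriv u) s := by
    intro s hs
    have hs0 : 0 < s := lt_of_le_of_lt ht₀ hs.1
    have hsinh : 0 < Real.sinh s := Real.sinh_pos_iff.2 hs0
    have h1 := hineq s hs
    have h2 : 0 ≤ Real.sinh s ^ m *
        (deriv (deriv u) s + ((n:ℝ)-1) * (Real.cosh s / Real.sinh s) * deriv u s) :=
      mul_nonneg (pow_nonneg hsinh.le m) h1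
    have hpow : Real.sinh s ^ m = Real.sinh s ^ (m-1) * Real.sinh s := by
      rw [← pow_succ]; congr 1; omega
    rw [hmn] at h2
    calc (0:ℝ) ≤ _ := h2
      _ = (m:ℝ) * Real.sinh s ^ (m-1) * Real.cosh s * deriv u s
          + Real.sinh s ^ m * deriv (deriv u) s := by
        rw [hpow]; field_simp; ring
  -- g is monotone on subintervals of (t₀, T)
  have hg_le : ∀ a b : ℝ, t₀ < a → a ≤ b → b < T → g a ≤ g b := by
    intro a b ha hab hb
    have hsub : Set.Icc a b ⊆ Set.Ioo t₀ T := fun x hx =>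
      ⟨lt_of_lt_of_le ha hx.1, lt_of_le_of_lt hx.2 hb⟩
    have hdiff : ∀ x ∈ Set.Icc a b, DifferentiableAt ℝ g x := fun x hx =>
      (hgd x (hsub0 (hsub hx))).differentiableAt
    have hmon := monotoneOn_of_deriv_nonneg (convex_Icc a b)
      (fun x hx => (hdiff x hx).continuousAt.continuousWithinAt)
      (fun x hx => (hdiff x (interior_subset hx)).differentiableWithinAt)
      (fun x hx => by
        rw [interior_Icc] at hx
        rw [(hgd x (hsub0 (hsub (Set.Ioo_subset_Icc_self hx)))).deriv]
        exact hgmono x (hsub (Set.Ioo_subset_Icc_self hx)))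
    exact hmon (Set.left_mem_Icc.2 hab) (Set.right_mem_Icc.2 hab) hab
  -- mean value theorem gives a point where u' < 0
  set s₀ := (t₀ + T)/2 with hs₀_def
  have hs₀ : s₀ ∈ Set.Ioo t₀ T := ⟨by simp [hs₀_def]; linarith, by simp [hs₀_def]; linarith⟩
  have hs₀pos : 0 < s₀ := lt_of_le_of_lt ht₀ hs₀.1
  obtain ⟨ξ, hξmem, hξeq⟩ := exists_deriv_eq_slope u hs₀.2
    (hreg.continuousOn.mono (fun x hx => ⟨lt_of_lt_of_le hs₀pos hx.1, hx.2⟩))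
    (fun x hx => (hdu x ⟨lt_trans hs₀pos hx.1, hx.2⟩).differentiableWithinAt)
  have hξ : ξ ∈ Set.Ioo t₀ T := ⟨lt_trans hs₀.1 hξmem.1, hξmem.2⟩
  have hξpos : 0 < ξ := lt_of_le_of_lt ht₀ hξ.1
  have hduξ : deriv u ξ < 0 := by
    rw [hξeq, huT]
    apply div_neg_of_neg_of_pos
    · have := hupos s₀ hs₀; linarith
    · linarith [hξmem.1, hs₀.2]
  set c := g ξ with hc_def
  have hc : c < 0 :=
    mul_neg_of_pos_of_neg (pow_pos (Real.sinh_pos_iff.2 hξpos) m) hduξ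
  -- Claim A
  have claimA : ∀ t ∈ Set.Ioo t₀ ξ, deriv u t ≤ c / Real.sinh t ^ m := by
    intro t ht
    have ht0 : 0 < t := lt_of_le_of_lt ht₀ ht.1
    have hsinh : 0 < Real.sinh t ^ m := pow_pos (Real.sinh_pos_iff.2 ht0) m
    have hle : g t ≤ c := hg_le t ξ ht.1 ht.2.le hξ.2
    rw [le_div_iff₀ hsinh]
    calc deriv u t * Real.sinh t ^ m = g t := by rw [hg_def]; ring
      _ ≤ c := hle
  rcases ht₀.eq_or_lt with h0 | h0
  · -- case t₀ = 0 : u blows up near 0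
    obtain ⟨M, hM⟩ := hbdd h0.symm
    set δ := min ξ 1 / 2 with hδ_def
    have hδpos : 0 < δ := by
      exact div_pos (lt_min hξpos one_pos) two_pos
    have hδξ : δ < ξ := by
      have h1 : min ξ 1 ≤ ξ := min_le_left _ _
      have : δ ≤ ξ / 2 := by rw [hδ_def]; linarith
      linarith
    have hδ1 : δ ≤ 1 := by
      have : min ξ 1 ≤ 1 := min_le_right _ _
      rw [hδ_def]; linarith
    have hδT : δ < T := lt_trans hδξ hξ.2
    set C := Real.cosh 1 ^ m with hC_def
    have hCpos : 0 < C := pow_pos (lt_of_lt_of_le one_pos (Real.one_le_cosh 1)) m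
    set K := -c / C with hK_def
    have hKpos : 0 < K := div_pos (neg_pos.2 hc) hCpos
    -- derivative bound on (0, δ)
    have hderiv_bd : ∀ s ∈ Set.Ioo (0:ℝ) δ, deriv u s ≤ -K / s := by
      intro s hs
      have hs0 : 0 < s := hs.1
      have hsξ : s ∈ Set.Ioo t₀ ξ := ⟨by rw [← h0]; exact hs0, lt_trans hs.2 hδξ⟩
      have hs1 : s ≤ 1 := le_of_lt (lt_of_lt_of_le hs.2 hδ1)
      have hsinhpos : 0 < Real.sinh s ^ m := pow_pos (Real.sinh_pos_iff.2 hs0) m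
      have hbound : Real.sinh s ^ m ≤ C * s := by
        have h1 : Real.sinh s ≤ Real.cosh 1 * s := sinh_le_cosh_one_mul hs0.le hs1
        have h2 : Real.sinh s ^ m ≤ (Real.cosh 1 * s) ^ m :=
          pow_le_pow_left₀ (Real.sinh_pos_iff.2 hs0).le h1 m
        have h3 : (Real.cosh 1 * s) ^ m = C * s ^ m := by rw [hC_def, mul_pow]
        have h4 : s ^ m ≤ s := by
          calc s ^ m ≤ s ^ 1 := pow_le_pow_of_le_one hs0.le hs1 hm1
            _ = s := pow_one s
        calc Real.sinh s ^ m ≤ C * s ^ m := by rw [← h3]; exact h2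
          _ ≤ C * s := by nlinarith
      have hstep : c / Real.sinh s ^ m ≤ c / (C * s) := by
        have h5 : 1 / (C * s) ≤ 1 / Real.sinh s ^ m :=
          one_div_le_one_div_of_le hsinhpos hbound
        have h6 : c * (1 / Real.sinh s ^ m) ≤ c * (1 / (C * s)) :=
          mul_le_mul_of_nonpos_left h5 hc.le
        calc c / Real.sinh s ^ m = c * (1 / Real.sinh s ^ m) := by ring
          _ ≤ c * (1 / (C * s)) := h6
          _ = c / (C * s) := by ring
      have hfin : c / (C * s) = -K / s := by
        rw [hK_def]; field_simp
      calc deriv u s ≤ c / Real.sinh s ^ m := claimA s hsξ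
        _ ≤ c / (C * s) := hstep
        _ = -K / s := hfin
    -- the auxiliary function h = u + K log is antitone on (0, δ)
    have hanti : ∀ t : ℝ, 0 < t → t < δ →
        u δ + K * Real.log δ ≤ u t + K * Real.log t := by
      intro t ht0 htδ
      have hIccsub : Set.Icc t δ ⊆ Set.Ioc 0 T := fun x hx =>
        ⟨lt_of_lt_of_le ht0 hx.1, le_trans hx.2 hδT.le⟩
      have hd : ∀ x ∈ Set.Ioo t δ, HasDerivAt (fun y => u y + K * Real.log y)
          (deriv u x + K * x⁻¹) x := by
        intro x hx
        have hx0 : 0 < x := lt_trans ht0 hx.1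
        exact ((hdu x ⟨hx0, lt_trans hx.2 hδT⟩).hasDerivAt).add
          ((Real.hasDerivAt_log hx0.ne').const_mul K)
      have ha := antitoneOn_of_deriv_nonpos (convex_Icc t δ)
        (ContinuousOn.add (hreg.continuousOn.mono hIccsub)
          (continuousOn_const.mul (Real.continuousOn_log.mono (fun x hx =>
            (lt_of_lt_of_le ht0 hx.1).ne'))))
        (fun x hx => by
          rw [interior_Icc] at hx
          exact ((hd x hx).differentiableAt).differentiableWithinAt)
        (fun x hx => by
          rw [interior_Icc] at hx
          show deriv (fun y => u y + K * Real.log y) x ≤ 0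
          rw [(hd x hx).deriv]
          have hx0 : 0 < x := lt_trans ht0 hx.1
          have hb := hderiv_bd x ⟨hx0, hx.2⟩
          have : K * x⁻¹ = K / x := by ring
          rw [this]
          have : -K / x + K / x = 0 := by ring
          linarith [hb])
      exact ha (Set.left_mem_Icc.2 htδ.le) (Set.right_mem_Icc.2 htδ.le) htδ.le
    -- choose t small enough to contradict boundedness
    set L := (u δ + K * Real.log δ - M - 1) / K with hL_def
    set t := min (δ/2) (Real.exp L) with ht_def
    have ht0 : 0 < t := lt_min (by linarith) (Real.exp_pos L)
    have htδ : t < δ := lt_of_le_of_lt (min_le_left _ _) (by linarith)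
    have hlogt : Real.log t ≤ L := by
      rw [Real.log_le_iff_le_exp ht0]
      exact min_le_right _ _
    have hut : u δ + K * Real.log δ ≤ u t + K * Real.log t := hanti t ht0 htδ
    have hKlog : K * Real.log t ≤ K * L := mul_le_mul_of_nonneg_left hlogt hKpos.le
    have hKL : K * L = u δ + K * Real.log δ - M - 1 := by
      rw [hL_def]; field_simp
    have hut2 : M + 1 ≤ u t := by nlinarith
    have habs := hM t ⟨ht0, lt_trans htδ hδT⟩
    have : u t ≤ M := le_trans (le_abs_self _) habs
    linarith
  · -- case t₀ > 0 : u strictly decreasing from u t₀ = 0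
    have huzero : u t₀ = 0 := hzero h0
    set mid := (t₀ + ξ)/2 with hmid_def
    have hmid : mid ∈ Set.Ioo t₀ ξ := ⟨by simp [hmid_def]; linarith [hξ.1], by simp [hmid_def]; linarith [hξ.1]⟩
    have hIccsub : Set.Icc t₀ ξ ⊆ Set.Ioc 0 T := fun x hx =>
      ⟨lt_of_lt_of_le h0 hx.1, le_trans hx.2 hξ.2.le⟩
    have hanti := strictAntiOn_of_deriv_neg (convex_Icc t₀ ξ)
      (hreg.continuousOn.mono hIccsub)
      (fun x hx => by
        rw [interior_Icc] at hx
        have := claimA x hx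
        have hsinh : 0 < Real.sinh x ^ m :=
          pow_pos (Real.sinh_pos_iff.2 (lt_of_lt_of_le h0 hx.1.le)) m
        have : c / Real.sinh x ^ m < 0 := div_neg_of_neg_of_pos hc hsinh
        linarith [claimA x hx])
    have h1 : u mid < u t₀ :=
      hanti (Set.left_mem_Icc.2 hξ.1.le) (Set.Ioo_subset_Icc_self hmid) hmid.1
    have h2 : 0 < u mid := hupos mid ⟨hmid.1, lt_trans hmid.2 hξ.2⟩
    linarith
end

section
/- Under the same hypotheses as for the bubble U, the function z_n(x) := ((2-n)/2) U(x) - ∇U(x)·(x + D e_n) + D ∂U/∂x_n(x) admits the explicit expression z_n(x) = α_n |K|^{-(n-2)/4} · ((n-2)/2) · (|x|² + 1 - D²) / (|x̃|² + (x_n + D)² - 1)^{n/2}, and it satisfies the linearized system: -((4(n-1))/(n-2)) Δ z_n = ((n+2)/(n-2)) K U^{4/(n-2)} z_n in {x_n > 0} and (2/(n-2)) ∂z_n/∂ν = (n/(n-2)) H U^{2/(n-2)} z_n on {x_n = 0}, with ν = -e_n. -/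
open Real MeasureTheory

/-- Partial derivative in direction `i` of a function on Euclidean space. -/
noncomputable def pd {n : ℕ} (f : EuclideanSpace ℝ (Fin n) → ℝ) (i : Fin n)
    (x : EuclideanSpace ℝ (Fin n)) : ℝ :=
  deriv (fun t : ℝ => f (x + t • EuclideanSpace.single i (1 : ℝ))) 0

/-- The Euclidean Laplacian (sum of second partial derivatives). -/
noncomputable def lap {n : ℕ} (f : EuclideanSpace ℝ (Fin n) → ℝ)
    (x : EuclideanSpace ℝ (Fin n)) : ℝ :=
  ∑ i, pd (pd f i) i x

private lemma hd_quad (b a : ℝ) : HasDerivAt (fun t : ℝ => b + 2*a*t + t^2) (2*a) 0 := by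
  have h1 : HasDerivAt (fun t : ℝ => b + 2*a*t + t^2) (0 + 2*a*1 + ((2:ℕ):ℝ)*0^(2-1)) 0 :=
    ((hasDerivAt_const 0 b).add ((hasDerivAt_id 0).const_mul (2*a))).add (hasDerivAt_pow 2 0)
  simpa using h1

private lemma hd_lin (c : ℝ) : HasDerivAt (fun t : ℝ => c + t) 1 0 :=
  (hasDerivAt_id (0:ℝ)).const_add c

private lemma hd_rpow (b a p : ℝ) (hb : 0 < b) :
    HasDerivAt (fun t : ℝ => (b + 2*a*t + t^2) ^ p) (p * b^(p-1) * (2*a)) 0 := by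
  have h := (hd_quad b a).rpow_const (p := p) (Or.inl (by norm_num; positivity))
  convert h using 1; ring

private lemma hd_mul_rpow (g c b a p : ℝ) (hb : 0 < b) :
    HasDerivAt (fun t : ℝ => (g + 2*c*t + t^2) * (b + 2*a*t + t^2) ^ p)
      (2*c * b^p + g * (p * b^(p-1) * (2*a))) 0 := by
  have h := (hd_quad g c).fun_mul (hd_rpow b a p hb)
  exact h.congr_deriv (by ring)

private lemma hd_second (K₀ n' g c a b p : ℝ) (hb : 0 < b) :
    HasDerivAt (fun t : ℝ =>
        K₀ * (2*(c+t)*(b+2*a*t+t^2)^p - n' * ((g+2*c*t+t^2)*(a+t)) * (b+2*a*t+t^2)^(p-1)))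
      (K₀ * ((2*1*b^p + 2*c*(p*b^(p-1)*(2*a)))
        - ((n' * (2*c*a + g*1)) * b^(p-1) + n' * (g*a) * ((p-1)*b^((p-1)-1)*(2*a))))) 0 := by
  have h1 : HasDerivAt (fun t : ℝ => 2*(c+t)*(b+2*a*t+t^2)^p)
      (2*1*b^p + 2*c*(p*b^(p-1)*(2*a))) 0 := by
    have := ((hd_lin c).const_mul 2).fun_mul (hd_rpow b a p hb)
    exact this.congr_deriv (by ring)
  have h2 : HasDerivAt (fun t : ℝ => n' * ((g+2*c*t+t^2)*(a+t)) * (b+2*a*t+t^2)^(p-1))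
      ((n' * (2*c*a + g*1)) * b^(p-1) + n' * (g*a) * ((p-1)*b^((p-1)-1)*(2*a))) 0 := by
    have hin : HasDerivAt (fun t : ℝ => n' * ((g+2*c*t+t^2)*(a+t)))
        (n' * (2*c*(a+0) + (g+2*c*0+0^2)*1)) 0 :=
      ((hd_quad g c).mul (hd_lin a)).const_mul n'
    have := hin.fun_mul (hd_rpow b a (p-1) hb)
    exact this.congr_deriv (by ring)
  exact (h1.sub h2).const_mul K₀

private lemma ev_pos (b a : ℝ) (hb : 0 < b) : ∀ᶠ t in nhds (0:ℝ), 0 < b + 2*a*t + t^2 := by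
  have hc : ContinuousAt (fun t : ℝ => b + 2*a*t + t^2) 0 := (hd_quad b a).continuousAt
  have hc' : Filter.Tendsto (fun t : ℝ => b + 2*a*t + t^2) (nhds 0)
      (nhds (b + 2*a*0 + 0^2)) := hc
  have hb0 : b + 2*a*0 + 0^2 = b := by norm_num
  rw [hb0] at hc'
  exact hc'.eventually (eventually_gt_nhds hb)

private lemma norm_sq_eq {n : ℕ} (x : EuclideanSpace ℝ (Fin n)) :
    ‖x‖^2 = ∑ j, (x j)^2 := by
  rw [EuclideanSpace.norm_eq, Real.sq_sqrt (by positivity)]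
  simp [sq_abs]

private lemma coord_line {n : ℕ} (x : EuclideanSpace ℝ (Fin n)) (i j : Fin n) (t : ℝ) :
    (x + t • EuclideanSpace.single i (1:ℝ)) j = x j + t * (if j = i then 1 else 0) := by
  simp [EuclideanSpace.single_apply]

private lemma sum_sq_line {n : ℕ} (x : EuclideanSpace ℝ (Fin n)) (i : Fin n) (t : ℝ) :
    ∑ j, ((x + t • EuclideanSpace.single i (1:ℝ)) j)^2 = ∑ j, (x j)^2 + (2*(x i)*t + t^2) := by
  have h : ∀ j : Fin n, ((x + t • EuclideanSpace.single i (1:ℝ)) j)^2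
      = (x j)^2 + (if j = i then 2*(x j)*t + t^2 else 0) := by
    intro j
    rw [coord_line]
    split <;> ring
  rw [Finset.sum_congr rfl (fun j _ => h j), Finset.sum_add_distrib,
    Finset.sum_ite_eq' Finset.univ i (fun j => 2*(x j)*t + t^2)]
  simp

private lemma sum_sq_shift {n : ℕ} (hn : 3 ≤ n) (D : ℝ) (x : EuclideanSpace ℝ (Fin n)) :
    ∑ j, (x j + if (j : ℕ) = n - 1 then D else 0)^2
      = ∑ j, (x j)^2 + (2*D*(x ⟨n-1, Nat.sub_lt (by omega) one_pos⟩) + D^2) := by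
  have h : ∀ j : Fin n, (x j + if (j : ℕ) = n - 1 then D else 0)^2
      = (x j)^2 + (if j = (⟨n-1, by omega⟩ : Fin n) then 2*D*(x j) + D^2 else 0) := by
    intro j
    by_cases hj : (j:ℕ) = n - 1
    · have hj' : j = (⟨n-1, by omega⟩ : Fin n) := Fin.ext hj
      simp only [hj, hj', if_pos, if_true]; ring
    · have hj' : j ≠ (⟨n-1, by omega⟩ : Fin n) := fun h => hj (by rw [h])
      simp only [hj, hj', if_false, if_neg, ite_false]; ring
  rw [Finset.sum_congr rfl (fun j _ => h j), Finset.sum_add_distrib,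
    Finset.sum_ite_eq' Finset.univ _ (fun j => 2*D*(x j) + D^2)]
  simp

private lemma sum_mul_shift {n : ℕ} (hn : 3 ≤ n) (D : ℝ) (x : EuclideanSpace ℝ (Fin n)) :
    ∑ j, (x j) * (x j + if (j : ℕ) = n - 1 then D else 0)
      = ∑ j, (x j)^2 + D*(x ⟨n-1, Nat.sub_lt (by omega) one_pos⟩) := by
  have h : ∀ j : Fin n, (x j) * (x j + if (j : ℕ) = n - 1 then D else 0)
      = (x j)^2 + (if j = (⟨n-1, by omega⟩ : Fin n) then D*(x j) else 0) := by
    intro j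
    by_cases hj : (j:ℕ) = n - 1
    · have hj' : j = (⟨n-1, by omega⟩ : Fin n) := Fin.ext hj
      simp only [hj, hj', if_pos, if_true]; ring
    · have hj' : j ≠ (⟨n-1, by omega⟩ : Fin n) := fun h => hj (by rw [h])
      simp only [hj, hj', if_false, if_neg, ite_false]; ring
  rw [Finset.sum_congr rfl (fun j _ => h j), Finset.sum_add_distrib,
    Finset.sum_ite_eq' Finset.univ _ (fun j => D*(x j))]
  simp

private theorem main_thm (n : ℕ) (hn : 3 ≤ n)
    (K H : ℝ) (hK : K < 0) (hH : 0 < H)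
    (D : ℝ) (hD : D = Real.sqrt ((n : ℝ) * ((n : ℝ) - 1)) * H / Real.sqrt |K|)
    (hD1 : 1 < D)
    (c : ℝ)
    (hc : c = ((4 * (n : ℝ) * ((n : ℝ) - 1)) ^ (((n : ℝ) - 2) / 4)) / |K| ^ (((n : ℝ) - 2) / 4))
    (N : Fin n) (hN : (N : ℕ) = n - 1)
    (U Z W G : EuclideanSpace ℝ (Fin n) → ℝ)
    (hWdef : ∀ x, W x = ‖x‖ ^ 2 + 2 * D * x N + D ^ 2 - 1)
    (hGdef : ∀ x, G x = ‖x‖ ^ 2 + 1 - D ^ 2)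
    (hU : ∀ x, U x = c * (W x) ^ (-(((n : ℝ) - 2) / 2)))
    (hZ : ∀ x, Z x = ((2 - (n : ℝ)) / 2) * U x
        - (∑ i, pd U i x * (x i + if (i : ℕ) = n - 1 then D else 0))
        + D * pd U N x) :
    (∀ x, 0 ≤ x N → Z x = c * (((n : ℝ) - 2) / 2) * (‖x‖ ^ 2 + 1 - D ^ 2) /
        (W x) ^ ((n : ℝ) / 2)) ∧
    (∀ x, 0 < x N → -((4 * ((n : ℝ) - 1)) / ((n : ℝ) - 2)) * lap Z x =
        ((n : ℝ) + 2) / ((n : ℝ) - 2) * K * (U x) ^ ((4 : ℝ) / ((n : ℝ) - 2)) * Z x) ∧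
    (∀ x, x N = 0 → (2 / ((n : ℝ) - 2)) * (-(pd Z N x)) =
        (n : ℝ) / ((n : ℝ) - 2) * H * (U x) ^ ((2 : ℝ) / ((n : ℝ) - 2)) * Z x) := by
  have hn3 : (3:ℝ) ≤ (n:ℝ) := by exact_mod_cast hn
  have hn2 : (0:ℝ) < (n:ℝ) - 2 := by linarith
  have hKpos : (0:ℝ) < |K| := abs_pos.mpr hK.ne
  have hc0 : 0 < c := by
    rw [hc]
    have h1 : (0:ℝ) < 4 * (n:ℝ) * ((n:ℝ)-1) := by nlinarith
    positivity
  -- the line computation for W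
  have hWline : ∀ (y : EuclideanSpace ℝ (Fin n)) (i : Fin n) (t : ℝ),
      W (y + t • EuclideanSpace.single i (1:ℝ))
        = W y + 2*(y i + if (i:ℕ) = n - 1 then D else 0)*t + t^2 := by
    intro y i t
    rw [hWdef, hWdef, norm_sq_eq, norm_sq_eq, sum_sq_line, coord_line]
    by_cases hiN : i = N
    · simp [hiN, hN]
      ring
    · have h1 : N ≠ i := fun h => hiN h.symm
      have h2 : ¬ ((i:ℕ) = n - 1) := fun h => hiN (Fin.ext (by rw [h, hN]))
      simp only [if_neg h1, if_neg h2]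
      ring
  have hGline : ∀ (y : EuclideanSpace ℝ (Fin n)) (i : Fin n) (t : ℝ),
      G (y + t • EuclideanSpace.single i (1:ℝ)) = G y + 2*(y i)*t + t^2 := by
    intro y i t
    rw [hGdef, hGdef, norm_sq_eq, norm_sq_eq, sum_sq_line]
    ring
  have hWpos : ∀ y : EuclideanSpace ℝ (Fin n), 0 ≤ y N → 0 < W y := by
    intro y hy
    rw [hWdef, norm_sq_eq]
    have h1 : (y N)^2 ≤ ∑ j, (y j)^2 :=
      Finset.single_le_sum (f := fun j => (y j)^2) (fun j _ => sq_nonneg _) (Finset.mem_univ N)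
    nlinarith
  have hNN : (⟨n-1, by omega⟩ : Fin n) = N := Fin.ext (by simp [hN])
  -- first derivative of U
  have pdU : ∀ (y : EuclideanSpace ℝ (Fin n)) (i : Fin n), 0 < W y →
      pd U i y = -(c * ((n:ℝ)-2) * (y i + if (i:ℕ) = n - 1 then D else 0)
        * (W y) ^ (-((n:ℝ)/2))) := by
    intro y i hb
    have hline : (fun t : ℝ => U (y + t • EuclideanSpace.single i (1:ℝ)))
        = fun t : ℝ => c * ((W y) + 2*(y i + if (i:ℕ) = n - 1 then D else 0)*t + t^2)
            ^ (-(((n:ℝ)-2)/2)) := by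
      funext t
      rw [hU, hWline]
    have hd := (hd_rpow (W y) (y i + if (i:ℕ) = n - 1 then D else 0)
      (-(((n:ℝ)-2)/2)) hb).const_mul c
    unfold pd
    rw [hline, hd.deriv]
    rw [show (-(((n:ℝ)-2)/2)) - 1 = -((n:ℝ)/2) from by ring]
    ring
  -- explicit form of Z
  have hZform : ∀ y : EuclideanSpace ℝ (Fin n), 0 < W y →
      Z y = c * (((n:ℝ)-2)/2) * G y * (W y) ^ (-((n:ℝ)/2)) := by
    intro y hb
    have hsum : ∑ i, pd U i y * (y i + if (i:ℕ) = n - 1 then D else 0)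
        = -(c * ((n:ℝ)-2) * (W y) ^ (-((n:ℝ)/2)))
            * (∑ j, (y j)^2 + (2*D*(y N) + D^2)) := by
      have h1 : ∀ i : Fin n, pd U i y * (y i + if (i:ℕ) = n - 1 then D else 0)
          = -(c * ((n:ℝ)-2) * (W y) ^ (-((n:ℝ)/2)))
              * (y i + if (i:ℕ) = n - 1 then D else 0)^2 := by
        intro i; rw [pdU y i hb]; ring
      rw [Finset.sum_congr rfl (fun i _ => h1 i), ← Finset.mul_sum, sum_sq_shift hn D y, hNN]
    have hW1 : ∑ j, (y j)^2 + (2*D*(y N) + D^2) = W y + 1 := by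
      rw [hWdef, norm_sq_eq]; ring
    rw [hZ, hsum, hW1, hU, pdU y N hb, if_pos hN]
    rw [show (-(((n:ℝ)-2)/2)) = -((n:ℝ)/2) + 1 from by ring, Real.rpow_add_one hb.ne']
    have hGW : G y = W y + 2 - 2*D*(y N) - 2*D^2 := by rw [hGdef, hWdef]; ring
    rw [hGW]
    ring
  -- first derivative of Z
  have pdZ : ∀ (y : EuclideanSpace ℝ (Fin n)) (i : Fin n), 0 < W y →
      pd Z i y = c * (((n:ℝ)-2)/2) * (2*(y i) * (W y) ^ (-((n:ℝ)/2))
        + G y * ((-((n:ℝ)/2)) * (W y) ^ (-((n:ℝ)/2) - 1)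
            * (2*(y i + if (i:ℕ) = n - 1 then D else 0)))) := by
    intro y i hb
    have heq : (fun t : ℝ => Z (y + t • EuclideanSpace.single i (1:ℝ))) =ᶠ[nhds 0]
        (fun t : ℝ => c * (((n:ℝ)-2)/2) * ((G y + 2*(y i)*t + t^2) *
          ((W y) + 2*(y i + if (i:ℕ) = n - 1 then D else 0)*t + t^2) ^ (-((n:ℝ)/2)))) := by
      filter_upwards [ev_pos (W y) (y i + if (i:ℕ) = n - 1 then D else 0) hb] with t ht
      have hWt : 0 < W (y + t • EuclideanSpace.single i (1:ℝ)) := by rw [hWline]; exact ht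
      rw [hZform _ hWt, hGline, hWline]
      ring
    have hd := (hd_mul_rpow (G y) (y i) (W y) (y i + if (i:ℕ) = n - 1 then D else 0)
      (-((n:ℝ)/2)) hb).const_mul (c * (((n:ℝ)-2)/2))
    unfold pd
    rw [heq.deriv_eq, hd.deriv]
  -- second derivative of Z
  have pd2 : ∀ (y : EuclideanSpace ℝ (Fin n)) (i : Fin n), 0 < W y →
      pd (pd Z i) i y = c * (((n:ℝ)-2)/2) *
        ((2*1*(W y) ^ (-((n:ℝ)/2))
          + 2*(y i)*((-((n:ℝ)/2))*(W y) ^ (-((n:ℝ)/2)-1)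
              *(2*(y i + if (i:ℕ) = n - 1 then D else 0))))
        - (((n:ℝ) * (2*(y i)*(y i + if (i:ℕ) = n - 1 then D else 0) + G y*1))
              * (W y) ^ (-((n:ℝ)/2)-1)
          + (n:ℝ) * (G y*(y i + if (i:ℕ) = n - 1 then D else 0))
              * ((-((n:ℝ)/2)-1)*(W y) ^ ((-((n:ℝ)/2)-1)-1)
                *(2*(y i + if (i:ℕ) = n - 1 then D else 0))))) := by
    intro y i hb
    have heq : (fun t : ℝ => pd Z i (y + t • EuclideanSpace.single i (1:ℝ))) =ᶠ[nhds 0]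
        (fun t : ℝ => c * (((n:ℝ)-2)/2) *
          (2*((y i)+t)*((W y) + 2*(y i + if (i:ℕ) = n - 1 then D else 0)*t + t^2)
              ^ (-((n:ℝ)/2))
          - (n:ℝ) * ((G y + 2*(y i)*t + t^2)*((y i + if (i:ℕ) = n - 1 then D else 0)+t))
            * ((W y) + 2*(y i + if (i:ℕ) = n - 1 then D else 0)*t + t^2)
              ^ (-((n:ℝ)/2)-1))) := by
      filter_upwards [ev_pos (W y) (y i + if (i:ℕ) = n - 1 then D else 0) hb] with t ht
      have hWt : 0 < W (y + t • EuclideanSpace.single i (1:ℝ)) := by rw [hWline]; exact ht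
      rw [pdZ _ i hWt, hWline, hGline, coord_line]
      simp only [eq_self_iff_true, if_true]
      ring
    rw [show pd (pd Z i) i y
      = deriv (fun t : ℝ => pd Z i (y + t • EuclideanSpace.single i (1:ℝ))) 0 from rfl]
    rw [heq.deriv_eq, (hd_second (c * (((n:ℝ)-2)/2)) (n:ℝ) (G y) (y i)
      (y i + if (i:ℕ) = n - 1 then D else 0) (W y) (-((n:ℝ)/2)) hb).deriv]
  refine ⟨?_, ?_, ?_⟩
  · -- part 1
    intro x hx
    have hb := hWpos x hx
    rw [hZform x hb, hGdef, Real.rpow_neg hb.le ((n:ℝ)/2)]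
    ring
  · -- part 2
    intro x hx
    have hb := hWpos x hx.le
    have hterm : ∀ i : Fin n, c * (((n:ℝ)-2)/2) * ((2*1*(W x) ^ (-((n:ℝ)/2))
          + 2*(x i)*((-((n:ℝ)/2))*(W x) ^ (-((n:ℝ)/2)-1)
              *(2*(x i + if (i:ℕ) = n - 1 then D else 0))))
        - (((n:ℝ) * (2*(x i)*(x i + if (i:ℕ) = n - 1 then D else 0) + G x*1))
              * (W x) ^ (-((n:ℝ)/2)-1)
          + (n:ℝ) * (G x*(x i + if (i:ℕ) = n - 1 then D else 0))
              * ((-((n:ℝ)/2)-1)*(W x) ^ ((-((n:ℝ)/2)-1)-1)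
                *(2*(x i + if (i:ℕ) = n - 1 then D else 0)))))
        = (c * (((n:ℝ)-2)/2) * (2*(W x) ^ (-((n:ℝ)/2)) - (n:ℝ)*(G x)*(W x) ^ (-((n:ℝ)/2)-1)))
          + (c * (((n:ℝ)-2)/2) * ((4*(-((n:ℝ)/2)) - 2*(n:ℝ))*(W x) ^ (-((n:ℝ)/2)-1)))
              * ((x i) * (x i + if (i:ℕ) = n - 1 then D else 0))
          + (c * (((n:ℝ)-2)/2) * (-2*(n:ℝ)*(G x)*((-((n:ℝ)/2))-1)
              *(W x) ^ ((-((n:ℝ)/2)-1)-1)))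
              * ((x i + if (i:ℕ) = n - 1 then D else 0))^2 := by
      intro i; ring
    have hlap : lap Z x = (n:ℝ) * (c * (((n:ℝ)-2)/2) * (2*(W x) ^ (-((n:ℝ)/2))
          - (n:ℝ)*(G x)*(W x) ^ (-((n:ℝ)/2)-1)))
        + (c * (((n:ℝ)-2)/2) * ((4*(-((n:ℝ)/2)) - 2*(n:ℝ))*(W x) ^ (-((n:ℝ)/2)-1)))
            * ((∑ j, (x j)^2) + D*(x N))
        + (c * (((n:ℝ)-2)/2) * (-2*(n:ℝ)*(G x)*((-((n:ℝ)/2))-1)*(W x) ^ ((-((n:ℝ)/2)-1)-1)))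
            * ((∑ j, (x j)^2) + (2*D*(x N) + D^2)) := by
      unfold lap
      rw [Finset.sum_congr rfl (fun i _ => (pd2 x i hb).trans (hterm i))]
      rw [Finset.sum_add_distrib, Finset.sum_add_distrib, Finset.sum_const, Finset.card_univ,
        Fintype.card_fin, nsmul_eq_mul, ← Finset.mul_sum, ← Finset.mul_sum,
        sum_mul_shift hn D x, sum_sq_shift hn D x, hNN]
    have hUpow : (U x) ^ ((4:ℝ)/((n:ℝ)-2)) = (4*(n:ℝ)*((n:ℝ)-1)/|K|) * (W x) ^ (-2:ℝ) := by
      rw [hU, Real.mul_rpow hc0.le (Real.rpow_nonneg hb.le _), ← Real.rpow_mul hb.le,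
        show (-(((n:ℝ)-2)/2)) * ((4:ℝ)/((n:ℝ)-2)) = (-2:ℝ) from by
          field_simp [hn2.ne']; try ring]
      congr 1
      rw [hc, Real.div_rpow (Real.rpow_nonneg (by nlinarith : (0:ℝ) ≤ 4*(n:ℝ)*((n:ℝ)-1)) _)
          (Real.rpow_nonneg (abs_nonneg K) _),
        ← Real.rpow_mul (by nlinarith : (0:ℝ) ≤ 4*(n:ℝ)*((n:ℝ)-1)),
        ← Real.rpow_mul (abs_nonneg K),
        show (((n:ℝ)-2)/4) * ((4:ℝ)/((n:ℝ)-2)) = (1:ℝ) from by field_simp [hn2.ne'],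
        Real.rpow_one, Real.rpow_one]
    have e3 : (W x) ^ (-2:ℝ) * (W x) ^ (-((n:ℝ)/2)) = (W x) ^ ((-((n:ℝ)/2)-1)-1) := by
      rw [← Real.rpow_add hb]; congr 1; ring
    have hRHSkey : ((n:ℝ)+2)/((n:ℝ)-2) * K * (U x) ^ ((4:ℝ)/((n:ℝ)-2)) * Z x
        = ((n:ℝ)+2)/((n:ℝ)-2) * (-(4*(n:ℝ)*((n:ℝ)-1))) * (c * (((n:ℝ)-2)/2) * G x)
          * (W x) ^ ((-((n:ℝ)/2)-1)-1) := by
      rw [hUpow, hZform x hb]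
      rw [show ((n:ℝ)+2)/((n:ℝ)-2) * K * ((4*(n:ℝ)*((n:ℝ)-1)/|K|) * (W x) ^ (-2:ℝ))
            * (c * (((n:ℝ)-2)/2) * G x * (W x) ^ (-((n:ℝ)/2)))
          = ((n:ℝ)+2)/((n:ℝ)-2) * (K * (4*(n:ℝ)*((n:ℝ)-1)/|K|)) * (c * (((n:ℝ)-2)/2) * G x)
            * ((W x) ^ (-2:ℝ) * (W x) ^ (-((n:ℝ)/2))) from by ring, e3]
      rw [abs_of_neg hK]
      rw [show K * (4*(n:ℝ)*((n:ℝ)-1)/(-K)) = -((4*(n:ℝ)*((n:ℝ)-1)) * (K/K)) from by ring,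
        div_self hK.ne, mul_one]
    rw [hRHSkey, hlap]
    have e1 : (W x) ^ (-((n:ℝ)/2) - 1) = (W x) ^ ((-((n:ℝ)/2)-1)-1) * (W x) := by
      conv_lhs => rw [show -((n:ℝ)/2) - 1 = ((-((n:ℝ)/2)-1)-1) + 1 from by ring,
        Real.rpow_add_one hb.ne']
    have e2 : (W x) ^ (-((n:ℝ)/2)) = (W x) ^ ((-((n:ℝ)/2)-1)-1) * (W x) * (W x) := by
      conv_lhs => rw [show -((n:ℝ)/2) = ((-((n:ℝ)/2)-1)-1) + 1 + 1 from by ring,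
        Real.rpow_add_one hb.ne', Real.rpow_add_one hb.ne']
    have hGS : G x = (∑ j, (x j)^2) + 1 - D^2 := by rw [hGdef, norm_sq_eq]
    have hWS : W x = (∑ j, (x j)^2) + 2*D*(x N) + D^2 - 1 := by rw [hWdef, norm_sq_eq]
    rw [e2, e1, hGS, hWS]
    ring
  · -- part 3
    intro x hx
    have hb : 0 < W x := hWpos x (by rw [hx])
    have hUpow2 : (U x) ^ ((2:ℝ)/((n:ℝ)-2))
        = (2 * Real.sqrt ((n:ℝ)*((n:ℝ)-1)) / Real.sqrt |K|) * (W x) ^ (-1:ℝ) := by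
      rw [hU, Real.mul_rpow hc0.le (Real.rpow_nonneg hb.le _), ← Real.rpow_mul hb.le,
        show (-(((n:ℝ)-2)/2)) * ((2:ℝ)/((n:ℝ)-2)) = (-1:ℝ) from by
          field_simp [hn2.ne']; try ring]
      congr 1
      rw [hc, Real.div_rpow (Real.rpow_nonneg (by nlinarith : (0:ℝ) ≤ 4*(n:ℝ)*((n:ℝ)-1)) _)
          (Real.rpow_nonneg (abs_nonneg K) _),
        ← Real.rpow_mul (by nlinarith : (0:ℝ) ≤ 4*(n:ℝ)*((n:ℝ)-1)),
        ← Real.rpow_mul (abs_nonneg K),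
        show (((n:ℝ)-2)/4) * ((2:ℝ)/((n:ℝ)-2)) = (1/2:ℝ) from by field_simp [hn2.ne']; try ring,
        ← Real.sqrt_eq_rpow, ← Real.sqrt_eq_rpow,
        show 4*(n:ℝ)*((n:ℝ)-1) = 4*((n:ℝ)*((n:ℝ)-1)) from by ring,
        Real.sqrt_mul (by norm_num : (0:ℝ) ≤ 4) _,
        show Real.sqrt 4 = 2 from by
          rw [show (4:ℝ) = 2^2 from by norm_num, Real.sqrt_sq (by norm_num : (0:ℝ) ≤ 2)]]
    have hfactor : H * (2 * Real.sqrt ((n:ℝ)*((n:ℝ)-1)) / Real.sqrt |K|) = 2 * D := by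
      rw [hD]; ring
    have e4 : (W x) ^ (-1:ℝ) * (W x) ^ (-((n:ℝ)/2)) = (W x) ^ (-((n:ℝ)/2) - 1) := by
      rw [← Real.rpow_add hb]; congr 1; ring
    rw [pdZ x N hb, if_pos hN, hx, hZform x hb, hUpow2]
    rw [show (n:ℝ)/((n:ℝ)-2) * H
          * ((2 * Real.sqrt ((n:ℝ)*((n:ℝ)-1)) / Real.sqrt |K|) * (W x) ^ (-1:ℝ))
          * (c * (((n:ℝ)-2)/2) * G x * (W x) ^ (-((n:ℝ)/2)))
        = (n:ℝ)/((n:ℝ)-2) * (H * (2 * Real.sqrt ((n:ℝ)*((n:ℝ)-1)) / Real.sqrt |K|))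
          * (c * (((n:ℝ)-2)/2) * G x) * ((W x) ^ (-1:ℝ) * (W x) ^ (-((n:ℝ)/2))) from by ring,
      hfactor, e4]
    ring


/-- The function `z_n = ((2-n)/2)U - ∇U·(x + D e_n) + D ∂U/∂x_n` has the explicit form
`α_n |K|^{-(n-2)/4} ((n-2)/2)(|x|² + 1 - D²)/(|x̃|² + (x_n+D)² - 1)^{n/2}` on the closed
half-space and solves the linearized system there. -/
theorem radial_element_of_kernel (n : ℕ) (hn : 3 ≤ n)
    (K H : ℝ) (hK : K < 0) (hH : 0 < H)
    (D : ℝ) (hD : D = Real.sqrt ((n : ℝ) * ((n : ℝ) - 1)) * H / Real.sqrt |K|)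
    (hD1 : 1 < D)
    (U Z : EuclideanSpace ℝ (Fin n) → ℝ)
    (hU : ∀ x : EuclideanSpace ℝ (Fin n),
      U x = ((4 * (n : ℝ) * ((n : ℝ) - 1)) ^ (((n : ℝ) - 2) / 4)) / |K| ^ (((n : ℝ) - 2) / 4) *
        (‖x‖ ^ 2 + 2 * D * x ⟨n - 1, by omega⟩ + D ^ 2 - 1) ^ (-(((n : ℝ) - 2) / 2)))
    (hZ : ∀ x : EuclideanSpace ℝ (Fin n),
      Z x = ((2 - (n : ℝ)) / 2) * U x
        - (∑ i, pd U i x * (x i + if (i : ℕ) = n - 1 then D else 0))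
        + D * pd U ⟨n - 1, by omega⟩ x) :
    (∀ x : EuclideanSpace ℝ (Fin n), 0 ≤ x ⟨n - 1, by omega⟩ →
      Z x = ((4 * (n : ℝ) * ((n : ℝ) - 1)) ^ (((n : ℝ) - 2) / 4)) / |K| ^ (((n : ℝ) - 2) / 4) *
        (((n : ℝ) - 2) / 2) * (‖x‖ ^ 2 + 1 - D ^ 2) /
          (‖x‖ ^ 2 + 2 * D * x ⟨n - 1, by omega⟩ + D ^ 2 - 1) ^ ((n : ℝ) / 2)) ∧
    (∀ x : EuclideanSpace ℝ (Fin n), 0 < x ⟨n - 1, by omega⟩ →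
      -((4 * ((n : ℝ) - 1)) / ((n : ℝ) - 2)) * lap Z x =
        ((n : ℝ) + 2) / ((n : ℝ) - 2) * K * (U x) ^ ((4 : ℝ) / ((n : ℝ) - 2)) * Z x) ∧
    (∀ x : EuclideanSpace ℝ (Fin n), x ⟨n - 1, by omega⟩ = 0 →
      (2 / ((n : ℝ) - 2)) * (-(pd Z ⟨n - 1, by omega⟩ x)) =
        (n : ℝ) / ((n : ℝ) - 2) * H * (U x) ^ ((2 : ℝ) / ((n : ℝ) - 2)) * Z x) := by
  exact main_thm n hn K H hK hH D hD hD1 _ rfl ⟨n - 1, by omega⟩ rfl U Z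
    (fun x => ‖x‖ ^ 2 + 2 * D * x ⟨n - 1, by omega⟩ + D ^ 2 - 1)
    (fun x => ‖x‖ ^ 2 + 1 - D ^ 2)
    (fun _ => rfl) (fun _ => rfl) hU hZ
end

section
/- Let n ≥ 2, D > 1, α ≥ 0 and m with n + α < 2m. Then ∫_{ℝⁿ₊} |x̃|^α / (|x̃|² + (x_n + D)² - 1)^m dx = ω_{n-1} · I_m^{n-2+α} · φ_{(2m-n-α+1)/2}, where ω_{n-1} is the surface measure of the unit sphere S^{n-2} ⊂ ℝ^{n-1}, I_m^β = ∫₀^∞ r^β/(1+r²)^m dr, and φ_s = ∫_D^∞ (t²-1)^{-s} dt. -/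
open Real MeasureTheory Measure Set Metric ENNReal

lemma aux_lintegral_polar {E : Type*} [NormedAddCommGroup E] [NormedSpace ℝ E]
    [MeasurableSpace E] [BorelSpace E] [Nontrivial E] [FiniteDimensional ℝ E]
    (μ : Measure E) [μ.IsAddHaarMeasure] (f : ℝ → ℝ≥0∞) (hf : Measurable f) :
    ∫⁻ x, f ‖x‖ ∂μ = μ.toSphere Set.univ *
      ∫⁻ r in Set.Ioi (0:ℝ), ENNReal.ofReal (r ^ (Module.finrank ℝ E - 1)) * f r := by
  calc
    ∫⁻ x, f ‖x‖ ∂μ = ∫⁻ x : ({0}ᶜ : Set E), f ‖x.1‖ ∂(μ.comap (↑)) := by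
      rw [lintegral_subtype_comap (measurableSet_singleton 0).compl fun x => f ‖x‖,
        restrict_compl_singleton]
    _ = ∫⁻ p : (sphere (0:E) 1 × Ioi (0:ℝ)),
          f p.2 ∂(μ.toSphere.prod (Measure.volumeIoiPow (Module.finrank ℝ E - 1))) :=
      by simpa only [homeomorphUnitSphereProd_apply_snd_coe] using
        (μ.measurePreserving_homeomorphUnitSphereProd.lintegral_comp_emb
          (Homeomorph.measurableEmbedding _) (fun p => f p.2))
    _ = μ.toSphere Set.univ * ∫⁻ r : Ioi (0:ℝ),
          f r ∂(Measure.volumeIoiPow (Module.finrank ℝ E - 1)) := by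
      rw [MeasureTheory.lintegral_prod (f := fun p : (Metric.sphere (0:E) 1 × Set.Ioi (0:ℝ)) => f ↑p.2)
        (show AEMeasurable (fun p : (Metric.sphere (0:E) 1 × Set.Ioi (0:ℝ)) => f ↑p.2)
            (μ.toSphere.prod (Measure.volumeIoiPow (Module.finrank ℝ E - 1))) from
          (hf.comp (measurable_subtype_coe.comp measurable_snd)).aemeasurable)]
      simp [lintegral_const, mul_comm]
    _ = μ.toSphere Set.univ *
        ∫⁻ r in Set.Ioi (0:ℝ), ENNReal.ofReal (r ^ (Module.finrank ℝ E - 1)) * f r := by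
      congr 1
      rw [Measure.volumeIoiPow,
        lintegral_withDensity_eq_lintegral_mul _
          ((measurable_subtype_coe.pow_const _).ennreal_ofReal)
          (show Measurable fun r : Ioi (0:ℝ) => f ↑r from hf.comp measurable_subtype_coe)]
      exact lintegral_subtype_comap measurableSet_Ioi
        (fun a => ENNReal.ofReal (a ^ (Module.finrank ℝ E - 1)) * f a)

lemma aux_lintegral_scale (c : ℝ) (hc : 0 < c) (f : ℝ → ℝ≥0∞) :
    ∫⁻ r in Set.Ioi (0:ℝ), f r = ENNReal.ofReal c * ∫⁻ s in Set.Ioi (0:ℝ), f (c * s) := by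
  have hemb : MeasurableEmbedding (fun s : ℝ => c * s) := by
    have := (Homeomorph.mulLeft₀ c hc.ne').measurableEmbedding
    rwa [Homeomorph.coe_mulLeft₀] at this
  have hmp : MeasurePreserving (fun s : ℝ => c * s) volume
      ((ENNReal.ofReal |c⁻¹|) • volume) :=
    ⟨hemb.measurable, Real.map_volume_mul_left hc.ne'⟩
  have him : (fun s : ℝ => c * s) ⁻¹' (Set.Ioi 0) = Set.Ioi 0 := by
    ext s; simp [Set.mem_Ioi, mul_pos_iff_of_pos_left, hc]
  have key := hmp.setLIntegral_comp_preimage_emb hemb f (Set.Ioi 0)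
  rw [him, Measure.restrict_smul, lintegral_smul_measure, smul_eq_mul] at key
  rw [key, ← mul_assoc, abs_of_pos (inv_pos.2 hc), ← ENNReal.ofReal_mul hc.le,
    mul_inv_cancel₀ hc.ne', ENNReal.ofReal_one, one_mul]

lemma aux_lintegral_shift (D : ℝ) (f : ℝ → ℝ≥0∞) :
    ∫⁻ t in Set.Ioi (0:ℝ), f (t + D) = ∫⁻ t in Set.Ioi D, f t := by
  have hemb : MeasurableEmbedding (fun t : ℝ => t + D) := by
    have := (Homeomorph.addRight D).measurableEmbedding
    simpa using this
  have key := (measurePreserving_add_right volume D).setLIntegral_comp_preimage_emb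
    hemb f (Set.Ioi D)
  rw [preimage_add_const_Ioi] at key
  norm_num at key
  exact key

lemma aux_norm_sq {N : ℕ} (z : EuclideanSpace ℝ (Fin N)) : ‖z‖ ^ 2 = ∑ j, z j ^ 2 := by
  rw [EuclideanSpace.norm_eq, Real.sq_sqrt (by positivity)]
  simp [Real.norm_eq_abs, sq_abs]

lemma aux_inner (k : ℕ) (hk : 1 ≤ k) (α m c : ℝ) (hc : 0 < c) :
    (∫⁻ y : Fin k → ℝ, ENNReal.ofReal
        ((∑ j, y j ^ 2) ^ (α / 2) / ((∑ j, y j ^ 2) + c ^ 2) ^ m))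
    = (volume : Measure (EuclideanSpace ℝ (Fin k))).toSphere Set.univ
      * (ENNReal.ofReal (c ^ ((k : ℝ) + α - 2 * m)) *
        ∫⁻ s in Set.Ioi (0:ℝ),
          ENNReal.ofReal (s ^ ((k : ℝ) - 1 + α) / (1 + s ^ 2) ^ m)) := by
  haveI : Nontrivial (EuclideanSpace ℝ (Fin k)) :=
    Module.nontrivial_of_finrank_pos (R := ℝ) (by rw [finrank_euclideanSpace_fin]; omega)
  set H : ℝ → ℝ≥0∞ := fun r =>
    ENNReal.ofReal ((r ^ 2) ^ (α / 2) / (r ^ 2 + c ^ 2) ^ m) with hH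
  have Hm : Measurable H := by
    apply Measurable.ennreal_ofReal
    exact ((measurable_id.pow_const 2).pow measurable_const).div
      (((measurable_id.pow_const 2).add_const _).pow measurable_const)
  have step1 : (∫⁻ y : Fin k → ℝ, ENNReal.ofReal
        ((∑ j, y j ^ 2) ^ (α / 2) / ((∑ j, y j ^ 2) + c ^ 2) ^ m))
      = ∫⁻ z : EuclideanSpace ℝ (Fin k), H ‖z‖ := by
    rw [← (EuclideanSpace.volume_preserving_symm_measurableEquiv_toLp (Fin k)).lintegral_comp_emb
      (MeasurableEquiv.measurableEmbedding _)
      (fun y : Fin k → ℝ => ENNReal.ofReal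
        ((∑ j, y j ^ 2) ^ (α / 2) / ((∑ j, y j ^ 2) + c ^ 2) ^ m))]
    refine lintegral_congr fun z => ?_
    have hz : ∑ j, ((MeasurableEquiv.toLp 2 (Fin k → ℝ)).symm z) j ^ 2 = ‖z‖ ^ 2 := by
      rw [aux_norm_sq z]; rfl
    rw [hH]; dsimp only; rw [hz]
  rw [step1, aux_lintegral_polar _ H Hm, finrank_euclideanSpace_fin]
  congr 1
  have hcongr : ∫⁻ r in Set.Ioi (0:ℝ), ENNReal.ofReal (r ^ (k - 1)) * H r
      = ∫⁻ r in Set.Ioi (0:ℝ),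
          ENNReal.ofReal (r ^ ((k : ℝ) - 1 + α) / (r ^ 2 + c ^ 2) ^ m) := by
    refine setLIntegral_congr_fun measurableSet_Ioi (fun r hr => ?_)
    have hr0 : (0:ℝ) < r := hr
    rw [hH]; dsimp only
    rw [← ENNReal.ofReal_mul (by positivity), ← mul_div_assoc]
    congr 2
    rw [← Real.rpow_natCast r (k - 1), ← Real.rpow_natCast r 2,
      ← Real.rpow_mul hr0.le, ← Real.rpow_add hr0]
    congr 1
    rw [Nat.cast_sub hk]
    push_cast
    ring
  rw [hcongr, aux_lintegral_scale c hc
    (fun r => ENNReal.ofReal (r ^ ((k : ℝ) - 1 + α) / (r ^ 2 + c ^ 2) ^ m))]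
  have hpt : ∫⁻ s in Set.Ioi (0:ℝ),
        ENNReal.ofReal ((c * s) ^ ((k : ℝ) - 1 + α) / ((c * s) ^ 2 + c ^ 2) ^ m)
      = ∫⁻ s in Set.Ioi (0:ℝ),
          ENNReal.ofReal (c ^ ((k : ℝ) - 1 + α - 2 * m)) *
            ENNReal.ofReal (s ^ ((k : ℝ) - 1 + α) / (1 + s ^ 2) ^ m) := by
    refine setLIntegral_congr_fun measurableSet_Ioi (fun s hs => ?_)
    have hs0 : (0:ℝ) < s := hs
    rw [← ENNReal.ofReal_mul (Real.rpow_nonneg hc.le _)]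
    congr 1
    rw [Real.mul_rpow hc.le hs0.le,
      show (c * s) ^ 2 + c ^ 2 = c ^ 2 * (1 + s ^ 2) by ring,
      Real.mul_rpow (sq_nonneg c) (by positivity),
      show (c ^ 2 : ℝ) ^ m = c ^ (2 * m) by
        rw [← Real.rpow_natCast c 2, ← Real.rpow_mul hc.le]; norm_num,
      Real.rpow_sub hc]
    have h1 : c ^ (2 * m) ≠ 0 := (Real.rpow_pos_of_pos hc _).ne'
    have h2 : ((1:ℝ) + s ^ 2) ^ m ≠ 0 := (Real.rpow_pos_of_pos (by positivity) _).ne'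
    field_simp
  rw [hpt, lintegral_const_mul _ (by
    apply Measurable.ennreal_ofReal
    exact (measurable_id.pow measurable_const).div
      ((measurable_const.add (measurable_id.pow_const 2)).pow measurable_const))]
  have hcc : c * c ^ ((k : ℝ) - 1 + α - 2 * m) = c ^ ((k : ℝ) + α - 2 * m) := by
    rw [show (k : ℝ) + α - 2 * m = 1 + ((k : ℝ) - 1 + α - 2 * m) by ring,
      Real.rpow_add hc, Real.rpow_one]
  rw [← mul_assoc, ← ENNReal.ofReal_mul hc.le, hcc]

lemma aux_omega (k : ℕ) (hk : 1 ≤ k) :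
    ((volume : Measure (EuclideanSpace ℝ (Fin k))).toSphere Set.univ).toReal
    = 2 * Real.pi ^ ((k : ℝ) / 2) / Real.Gamma ((k : ℝ) / 2) := by
  haveI : Nonempty (Fin k) := ⟨⟨0, by omega⟩⟩
  have hΓpos : 0 < Real.Gamma ((k : ℝ) / 2) :=
    Real.Gamma_pos_of_pos (by positivity)
  have hΓ1pos : 0 < Real.Gamma ((k : ℝ) / 2 + 1) :=
    Real.Gamma_pos_of_pos (by positivity)
  rw [Measure.toSphere_apply_univ, finrank_euclideanSpace_fin,
    EuclideanSpace.volume_ball, Fintype.card_fin, ENNReal.ofReal_one, one_pow, one_mul,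
    ENNReal.toReal_mul, ENNReal.toReal_natCast,
    ENNReal.toReal_ofReal (by positivity)]
  have hΓ : Real.Gamma ((k : ℝ) / 2 + 1) = ((k : ℝ) / 2) * Real.Gamma ((k : ℝ) / 2) :=
    Real.Gamma_add_one (by positivity)
  have hsq : (Real.sqrt π) ^ k = π ^ ((k : ℝ) / 2) := by
    rw [Real.sqrt_eq_rpow, ← Real.rpow_natCast (π ^ (1/2 : ℝ)) k, ← Real.rpow_mul pi_pos.le]
    congr 1
    ring
  rw [hΓ, hsq]
  have hkpos : (0:ℝ) < (k : ℝ) := by exact_mod_cast hk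
  field_simp

/-- Half-space integral formula: for `n + α < 2m`,
`∫_{ℝⁿ₊} |x̃|^α/(|x̃|²+(x_n+D)²-1)^m dx = ω_{n-1} I_m^{n-2+α} φ_{(2m-n-α+1)/2}`,
where `ω_{n-1} = 2π^{(n-1)/2}/Γ((n-1)/2)` is the surface measure of the unit sphere in
`ℝ^{n-1}`, `I_m^β = ∫₀^∞ r^β/(1+r²)^m dr` and `φ_s = ∫_D^∞ (t²-1)^{-s} dt`.
(Here `|x̃|² = ‖x‖² - x_n²` and `|x̃|²+(x_n+D)²-1 = ‖x‖²+2Dx_n+D²-1`.) -/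
theorem halfspace_integral_formula (n : ℕ) (hn : 2 ≤ n) (D α m : ℝ)
    (hD : 1 < D) (hα : 0 ≤ α) (h : (n : ℝ) + α < 2 * m) :
    (∫ x in {x : EuclideanSpace ℝ (Fin n) | 0 < x ⟨n - 1, by omega⟩},
        (‖x‖ ^ 2 - (x ⟨n - 1, by omega⟩) ^ 2) ^ (α / 2) /
          (‖x‖ ^ 2 + 2 * D * x ⟨n - 1, by omega⟩ + D ^ 2 - 1) ^ m) =
      (2 * Real.pi ^ (((n : ℝ) - 1) / 2) / Real.Gamma (((n : ℝ) - 1) / 2)) *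
        (∫ r in Set.Ioi (0 : ℝ), r ^ ((n : ℝ) - 2 + α) / (1 + r ^ 2) ^ m) *
        (∫ t in Set.Ioi D, (t ^ 2 - 1) ^ (-((2 * m - (n : ℝ) - α + 1) / 2))) := by
  obtain ⟨k, rfl⟩ : ∃ k, n = k + 1 := ⟨n - 1, by omega⟩
  have hk : 1 ≤ k := by omega
  -- rewrite the cast expressions
  have hexA : ((k + 1 : ℕ) : ℝ) - 2 + α = (k : ℝ) - 1 + α := by push_cast; ring
  have hexB : -((2 * m - ((k + 1 : ℕ) : ℝ) - α + 1) / 2) = ((k : ℝ) + α - 2 * m) / 2 := by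
    push_cast; ring
  have hexW : ((k + 1 : ℕ) : ℝ) - 1 = (k : ℝ) := by push_cast; ring
  rw [hexA, hexB, hexW]
  -- the coordinate index is (definitionaly) `Fin.last k`
  show (∫ x in {x : EuclideanSpace ℝ (Fin (k+1)) | 0 < x (Fin.last k)},
        (‖x‖ ^ 2 - (x (Fin.last k)) ^ 2) ^ (α / 2) /
          (‖x‖ ^ 2 + 2 * D * x (Fin.last k) + D ^ 2 - 1) ^ m) =
      (2 * Real.pi ^ ((k : ℝ) / 2) / Real.Gamma ((k : ℝ) / 2)) *
        (∫ r in Set.Ioi (0 : ℝ), r ^ ((k : ℝ) - 1 + α) / (1 + r ^ 2) ^ m) *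
        (∫ t in Set.Ioi D, (t ^ 2 - 1) ^ (((k : ℝ) + α - 2 * m) / 2))
  -- measurability of the coordinate function
  have hxi : Measurable fun x : EuclideanSpace ℝ (Fin (k+1)) => x (Fin.last k) :=
    (measurable_pi_apply (Fin.last k)).comp
      (MeasurableEquiv.toLp 2 (Fin (k+1) → ℝ)).symm.measurable
  have hS : MeasurableSet {x : EuclideanSpace ℝ (Fin (k+1)) | 0 < x (Fin.last k)} :=
    hxi measurableSet_Ioi
  have hn2 : Measurable fun x : EuclideanSpace ℝ (Fin (k+1)) => ‖x‖ ^ 2 :=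
    measurable_norm.pow_const 2
  have hF : Measurable fun x : EuclideanSpace ℝ (Fin (k+1)) =>
      (‖x‖ ^ 2 - (x (Fin.last k)) ^ 2) ^ (α / 2) /
        (‖x‖ ^ 2 + 2 * D * x (Fin.last k) + D ^ 2 - 1) ^ m :=
    ((hn2.sub (hxi.pow_const 2)).pow measurable_const).div
      ((((hn2.add (measurable_const.mul hxi)).add_const (D ^ 2)).sub_const 1).pow
        measurable_const)
  have hnum : ∀ x : EuclideanSpace ℝ (Fin (k+1)), 0 ≤ ‖x‖ ^ 2 - (x (Fin.last k)) ^ 2 := by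
    intro x
    have h1 := aux_norm_sq x
    have hle : (x (Fin.last k)) ^ 2 ≤ ∑ j, x j ^ 2 :=
      Finset.single_le_sum (f := fun j => x j ^ 2) (fun j _ => sq_nonneg _) (Finset.mem_univ _)
    linarith
  -- conversion of the three integrals to lower Lebesgue integrals
  have hLHS : (∫ x in {x : EuclideanSpace ℝ (Fin (k+1)) | 0 < x (Fin.last k)},
        (‖x‖ ^ 2 - (x (Fin.last k)) ^ 2) ^ (α / 2) /
          (‖x‖ ^ 2 + 2 * D * x (Fin.last k) + D ^ 2 - 1) ^ m)
      = (∫⁻ x in {x : EuclideanSpace ℝ (Fin (k+1)) | 0 < x (Fin.last k)},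
          ENNReal.ofReal ((‖x‖ ^ 2 - (x (Fin.last k)) ^ 2) ^ (α / 2) /
            (‖x‖ ^ 2 + 2 * D * x (Fin.last k) + D ^ 2 - 1) ^ m)).toReal := by
    refine MeasureTheory.integral_eq_lintegral_of_nonneg_ae ?_ hF.aestronglyMeasurable.restrict
    filter_upwards [ae_restrict_mem hS] with x hx
    have hxpos : 0 < x (Fin.last k) := hx
    have hden : 0 ≤ ‖x‖ ^ 2 + 2 * D * x (Fin.last k) + D ^ 2 - 1 := by
      nlinarith [sq_nonneg ‖x‖]
    exact div_nonneg (Real.rpow_nonneg (hnum x) _) (Real.rpow_nonneg hden _)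
  have hI : (∫ r in Set.Ioi (0:ℝ), r ^ ((k : ℝ) - 1 + α) / (1 + r ^ 2) ^ m)
      = (∫⁻ s in Set.Ioi (0:ℝ),
          ENNReal.ofReal (s ^ ((k : ℝ) - 1 + α) / (1 + s ^ 2) ^ m)).toReal := by
    refine MeasureTheory.integral_eq_lintegral_of_nonneg_ae ?_
      (((measurable_id.pow measurable_const).div
        ((measurable_const.add (measurable_id.pow_const 2)).pow
          measurable_const)).aestronglyMeasurable.restrict)
    filter_upwards [ae_restrict_mem measurableSet_Ioi] with r hr
    have hr0 : (0:ℝ) < r := hr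
    exact div_nonneg (Real.rpow_nonneg hr0.le _) (Real.rpow_nonneg (by positivity) _)
  have hJ : (∫ t in Set.Ioi D, (t ^ 2 - 1) ^ (((k : ℝ) + α - 2 * m) / 2))
      = (∫⁻ t in Set.Ioi D,
          ENNReal.ofReal ((t ^ 2 - 1) ^ (((k : ℝ) + α - 2 * m) / 2))).toReal := by
    refine MeasureTheory.integral_eq_lintegral_of_nonneg_ae ?_
      ((((measurable_id.pow_const 2).sub_const 1).pow
        measurable_const).aestronglyMeasurable.restrict)
    filter_upwards [ae_restrict_mem measurableSet_Ioi] with t ht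
    have ht0 : D < t := ht
    exact Real.rpow_nonneg (by nlinarith) _
  -- the product equivalence
  set E3 : EuclideanSpace ℝ (Fin (k+1)) ≃ᵐ ℝ × (Fin k → ℝ) :=
    (MeasurableEquiv.toLp 2 (Fin (k+1) → ℝ)).symm.trans
      (MeasurableEquiv.piFinSuccAbove (fun _ : Fin (k+1) => ℝ) (Fin.last k)) with hE3
  have mp : MeasurePreserving (⇑E3) volume volume := by
    have := (volume_preserving_piFinSuccAbove (fun _ : Fin (k+1) => ℝ) (Fin.last k)).comp
      (EuclideanSpace.volume_preserving_symm_measurableEquiv_toLp (Fin (k+1)))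
    exact this
  have hpre : {x : EuclideanSpace ℝ (Fin (k+1)) | 0 < x (Fin.last k)}
      = ⇑E3 ⁻¹' ((Set.Ioi (0:ℝ)) ×ˢ (Set.univ : Set (Fin k → ℝ))) := by
    ext x
    simp only [Set.mem_preimage, Set.mem_prod, Set.mem_univ, and_true, Set.mem_setOf_eq,
      Set.mem_Ioi]
    exact Iff.rfl
  have hcomp : ∀ x : EuclideanSpace ℝ (Fin (k+1)),
      ENNReal.ofReal ((‖x‖ ^ 2 - (x (Fin.last k)) ^ 2) ^ (α / 2) /
        (‖x‖ ^ 2 + 2 * D * x (Fin.last k) + D ^ 2 - 1) ^ m)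
      = (fun p : ℝ × (Fin k → ℝ) => ENNReal.ofReal
          ((∑ j, p.2 j ^ 2) ^ (α / 2) /
            ((∑ j, p.2 j ^ 2) + (p.1 + D) ^ 2 - 1) ^ m)) (E3 x) := by
    intro x
    have hsum : ∑ j : Fin k, (x ((Fin.last k).succAbove j)) ^ 2
        = ‖x‖ ^ 2 - x (Fin.last k) ^ 2 := by
      have h1 : ‖x‖ ^ 2 = ∑ j, x j ^ 2 := aux_norm_sq x
      rw [h1, Fin.sum_univ_castSucc]
      have hcongrs : ∑ j : Fin k, x ((Fin.last k).succAbove j) ^ 2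
          = ∑ j : Fin k, x j.castSucc ^ 2 :=
        Finset.sum_congr rfl fun j _ => by rw [Fin.succAbove_last_apply]
      rw [hcongrs]
      ring
    show ENNReal.ofReal _ = ENNReal.ofReal
        ((∑ j : Fin k, (x ((Fin.last k).succAbove j)) ^ 2) ^ (α / 2) /
          ((∑ j : Fin k, (x ((Fin.last k).succAbove j)) ^ 2)
            + (x (Fin.last k) + D) ^ 2 - 1) ^ m)
    rw [hsum,
      show (‖x‖ ^ 2 - x (Fin.last k) ^ 2) + (x (Fin.last k) + D) ^ 2 - 1
        = ‖x‖ ^ 2 + 2 * D * x (Fin.last k) + D ^ 2 - 1 from by ring]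
  have hg0 : Measurable (fun p : ℝ × (Fin k → ℝ) => ENNReal.ofReal
      ((∑ j, p.2 j ^ 2) ^ (α / 2) /
        ((∑ j, p.2 j ^ 2) + (p.1 + D) ^ 2 - 1) ^ m)) := by
    have hsum : Measurable fun p : ℝ × (Fin k → ℝ) => ∑ j, p.2 j ^ 2 := by
      apply Finset.measurable_sum
      intro j _
      exact ((measurable_pi_apply j).comp measurable_snd).pow_const 2
    exact ((hsum.pow measurable_const).div
      (((hsum.add ((measurable_fst.add_const D).pow_const 2)).sub_const 1).pow
        measurable_const)).ennreal_ofReal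
  -- the key ENNReal computation
  have KEY : (∫⁻ x in {x : EuclideanSpace ℝ (Fin (k+1)) | 0 < x (Fin.last k)},
        ENNReal.ofReal ((‖x‖ ^ 2 - (x (Fin.last k)) ^ 2) ^ (α / 2) /
          (‖x‖ ^ 2 + 2 * D * x (Fin.last k) + D ^ 2 - 1) ^ m))
      = (volume : Measure (EuclideanSpace ℝ (Fin k))).toSphere Set.univ
        * (∫⁻ s in Set.Ioi (0:ℝ),
            ENNReal.ofReal (s ^ ((k : ℝ) - 1 + α) / (1 + s ^ 2) ^ m))
        * (∫⁻ t in Set.Ioi D,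
            ENNReal.ofReal ((t ^ 2 - 1) ^ (((k : ℝ) + α - 2 * m) / 2))) := by
    calc
      (∫⁻ x in {x : EuclideanSpace ℝ (Fin (k+1)) | 0 < x (Fin.last k)},
          ENNReal.ofReal ((‖x‖ ^ 2 - (x (Fin.last k)) ^ 2) ^ (α / 2) /
            (‖x‖ ^ 2 + 2 * D * x (Fin.last k) + D ^ 2 - 1) ^ m))
        = ∫⁻ p in (Set.Ioi (0:ℝ)) ×ˢ (Set.univ : Set (Fin k → ℝ)),
            ENNReal.ofReal ((∑ j, p.2 j ^ 2) ^ (α / 2) /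
              ((∑ j, p.2 j ^ 2) + (p.1 + D) ^ 2 - 1) ^ m) := by
          rw [lintegral_congr hcomp, hpre]
          exact mp.setLIntegral_comp_preimage_emb E3.measurableEmbedding
            (fun p : ℝ × (Fin k → ℝ) => ENNReal.ofReal
              ((∑ j, p.2 j ^ 2) ^ (α / 2) /
                ((∑ j, p.2 j ^ 2) + (p.1 + D) ^ 2 - 1) ^ m))
            ((Set.Ioi (0:ℝ)) ×ˢ (Set.univ : Set (Fin k → ℝ)))
      _ = ∫⁻ t in Set.Ioi (0:ℝ), ∫⁻ y : Fin k → ℝ,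
            ENNReal.ofReal ((∑ j, y j ^ 2) ^ (α / 2) /
              ((∑ j, y j ^ 2) + (t + D) ^ 2 - 1) ^ m) := by
          rw [Measure.volume_eq_prod, ← Measure.prod_restrict, Measure.restrict_univ]
          exact MeasureTheory.lintegral_prod _ hg0.aemeasurable
      _ = ∫⁻ t in Set.Ioi (0:ℝ),
            ((volume : Measure (EuclideanSpace ℝ (Fin k))).toSphere Set.univ
              * (∫⁻ s in Set.Ioi (0:ℝ),
                  ENNReal.ofReal (s ^ ((k : ℝ) - 1 + α) / (1 + s ^ 2) ^ m)))
              * ENNReal.ofReal (((t + D) ^ 2 - 1) ^ (((k : ℝ) + α - 2 * m) / 2)) := by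
          refine setLIntegral_congr_fun measurableSet_Ioi (fun t ht => ?_)
          have ht0 : (0:ℝ) < t := ht
          have hu : (0:ℝ) < (t + D) ^ 2 - 1 := by nlinarith
          have hc : 0 < Real.sqrt ((t + D) ^ 2 - 1) := Real.sqrt_pos.2 hu
          have hc2 : Real.sqrt ((t + D) ^ 2 - 1) ^ 2 = (t + D) ^ 2 - 1 := Real.sq_sqrt hu.le
          have h1 : (∫⁻ y : Fin k → ℝ,
              ENNReal.ofReal ((∑ j, y j ^ 2) ^ (α / 2) /
                ((∑ j, y j ^ 2) + (t + D) ^ 2 - 1) ^ m))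
              = ∫⁻ y : Fin k → ℝ,
                ENNReal.ofReal ((∑ j, y j ^ 2) ^ (α / 2) /
                  ((∑ j, y j ^ 2) + Real.sqrt ((t + D) ^ 2 - 1) ^ 2) ^ m) := by
            refine lintegral_congr fun y => ?_
            rw [show (∑ j, y j ^ 2) + Real.sqrt ((t + D) ^ 2 - 1) ^ 2
                = (∑ j, y j ^ 2) + (t + D) ^ 2 - 1 from by rw [hc2]; ring]
          rw [h1, aux_inner k hk α m _ hc]
          have hcp : Real.sqrt ((t + D) ^ 2 - 1) ^ ((k : ℝ) + α - 2 * m)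
              = ((t + D) ^ 2 - 1) ^ (((k : ℝ) + α - 2 * m) / 2) := by
            rw [Real.sqrt_eq_rpow, ← Real.rpow_mul hu.le]
            congr 1
            ring
          rw [hcp]
          ring
      _ = (volume : Measure (EuclideanSpace ℝ (Fin k))).toSphere Set.univ
            * (∫⁻ s in Set.Ioi (0:ℝ),
                ENNReal.ofReal (s ^ ((k : ℝ) - 1 + α) / (1 + s ^ 2) ^ m))
            * (∫⁻ t in Set.Ioi D,
                ENNReal.ofReal ((t ^ 2 - 1) ^ (((k : ℝ) + α - 2 * m) / 2))) := by
          rw [lintegral_const_mul _ (show Measurable fun t : ℝ =>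
              ENNReal.ofReal (((t + D) ^ 2 - 1) ^ (((k : ℝ) + α - 2 * m) / 2)) from
            ((((measurable_id.add_const D).pow_const 2).sub_const 1).pow
              measurable_const).ennreal_ofReal)]
          congr 1
          exact aux_lintegral_shift D
            (fun t => ENNReal.ofReal ((t ^ 2 - 1) ^ (((k : ℝ) + α - 2 * m) / 2)))
  rw [hLHS, hI, hJ, KEY, ENNReal.toReal_mul, ENNReal.toReal_mul, aux_omega k hk]
end
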